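/- Let H_{A0}, H_A, H_B, H_{B0} be finite-dimensional Hilbert spaces and suppose ρ^{AB} is a density operator on H_A ⊗ H_B that is separable. Then for any positive operators M^{A0A} on H_{A0} ⊗ H_A and M^{BB0} on H_B ⊗ H_{B0}, the effective operator M̃^{A0B0} = Tr_{AB}[(I^{A0} ⊗ ρ^{AB} ⊗ I^{B0})(M^{A0A} ⊗ M^{BB0})] is separable on H_{A0} ⊗ H_{B0}. -/

import Mathlib

open Matrix BigOperators
open scoped Kronecker ComplexOrder

noncomputable section

/-- A positive operator on a bipartite space is separable if it is a finite sum of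
tensor (Kronecker) products of positive semidefinite local operators. -/
def IsSepOp {m n : Type*} [Fintype m] [Fintype n]
    (σ : Matrix (m × n) (m × n) ℂ) : Prop :=
  ∃ (k : ℕ) (f : Fin k → Matrix m m ℂ) (g : Fin k → Matrix n n ℂ),
    (∀ i, (f i).PosSemidef) ∧ (∀ i, (g i).PosSemidef) ∧ σ = ∑ i, f i ⊗ₖ g i

variable {A0 A B B0 : Type*} [Fintype A0] [Fintype A] [Fintype B] [Fintype B0]
  [DecidableEq A0] [DecidableEq A] [DecidableEq B] [DecidableEq B0]

/-- `I^{A0} ⊗ ρ^{AB} ⊗ I^{B0}` as an operator on `H_{A0} ⊗ H_A ⊗ H_B ⊗ H_{B0}`. -/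
def midEmbed (ρ : Matrix (A × B) (A × B) ℂ) :
    Matrix ((A0 × A) × (B × B0)) ((A0 × A) × (B × B0)) ℂ :=
  Matrix.of fun p q =>
    (if p.1.1 = q.1.1 then 1 else 0) * ρ (p.1.2, p.2.1) (q.1.2, q.2.1) *
      (if p.2.2 = q.2.2 then 1 else 0)

/-- Partial trace over the middle factors `H_A ⊗ H_B`. -/
def ptraceMid (M : Matrix ((A0 × A) × (B × B0)) ((A0 × A) × (B × B0)) ℂ) :
    Matrix (A0 × B0) (A0 × B0) ℂ :=
  Matrix.of fun p q => ∑ a : A, ∑ b : B, M ((p.1, a), (b, p.2)) ((q.1, a), (b, q.2))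

/-- Effective operator `Tr_{AB}[(I ⊗ ρ^{AB} ⊗ I)(M^{A0A} ⊗ M^{BB0})]`. -/
def effOp (ρ : Matrix (A × B) (A × B) ℂ)
    (M1 : Matrix (A0 × A) (A0 × A) ℂ) (M2 : Matrix (B × B0) (B × B0) ℂ) :
    Matrix (A0 × B0) (A0 × B0) ℂ :=
  ptraceMid (midEmbed ρ * (M1 ⊗ₖ M2))

/-- Tensor product of vectors. -/
def tens {m n : Type*} (u : m → ℂ) (v : n → ℂ) : m × n → ℂ := fun p => u p.1 * v p.2

/-- Rank-one projector `|v⟩⟨v|` associated to a vector. -/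
def vecProj {m : Type*} (v : m → ℂ) : Matrix m m ℂ := Matrix.of fun p q => v p * star (v q)

lemma psd_decomp {a : Type*} [Fintype a] (f : Matrix a a ℂ) (hf : f.PosSemidef) :
    ∃ C : Matrix a a ℂ, f = Cᴴ * C := by
  classical
  open scoped MatrixOrder in
  obtain ⟨B, hB⟩ := CStarAlgebra.nonneg_iff_eq_star_mul_self.mp hf.nonneg
  exact ⟨B, hB⟩

lemma compressA {m a : Type*} [Fintype m] [Fintype a]
    (M : Matrix (m × a) (m × a) ℂ) (hM : M.PosSemidef)
    (f : Matrix a a ℂ) (hf : f.PosSemidef) :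
    (Matrix.of fun p q : m => ∑ x : a, ∑ y : a, f x y * M (p, y) (q, x)).PosSemidef := by
  obtain ⟨C, hC⟩ := psd_decomp f hf
  refine Matrix.PosSemidef.of_dotProduct_mulVec_nonneg ?_ ?_
  · ext p q
    simp only [conjTranspose_apply, Matrix.of_apply, star_sum, star_mul']
    rw [Finset.sum_comm]
    refine Finset.sum_congr rfl fun x _ => Finset.sum_congr rfl fun y _ => ?_
    rw [← hf.1.apply, ← hM.1.apply]
    simp [star_star]
  · intro x
    have key : dotProduct (star x)
        ((Matrix.of fun p q : m => ∑ u : a, ∑ v : a, f u v * M (p, v) (q, u)) *ᵥ x)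
        = ∑ c : a, dotProduct (star (fun pa : m × a => x pa.1 * star (C c pa.2)))
            (M *ᵥ (fun pa : m × a => x pa.1 * star (C c pa.2))) := by
      subst hC
      simp only [dotProduct, mulVec, Matrix.of_apply, Fintype.sum_prod_type,
        Matrix.mul_apply, conjTranspose_apply, Finset.sum_mul, Finset.mul_sum,
        Pi.star_apply, star_mul', star_star]
      conv_lhs => enter [2, q, 2, p, 2, u]; rw [Finset.sum_comm]
      conv_lhs => enter [2, q, 2, p]; rw [Finset.sum_comm]
      conv_lhs => enter [2, q]; rw [Finset.sum_comm]
      conv_lhs => rw [Finset.sum_comm]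
      conv_rhs => enter [2, c, 2, p]; rw [Finset.sum_comm]
      conv_rhs => enter [2, c]; rw [Finset.sum_comm]
      conv_rhs => enter [2, c, 2, q, 2, p]; rw [Finset.sum_comm]
      conv_rhs => enter [2, c]; rw [Finset.sum_comm]
      refine Finset.sum_congr rfl fun c _ => Finset.sum_congr rfl fun q _ =>
        Finset.sum_congr rfl fun p _ => Finset.sum_congr rfl fun u _ =>
        Finset.sum_congr rfl fun v _ => ?_
      ring
    rw [key]
    exact Finset.sum_nonneg fun c _ => hM.dotProduct_mulVec_nonneg _

lemma compressB {m a : Type*} [Fintype m] [Fintype a]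
    (M : Matrix (a × m) (a × m) ℂ) (hM : M.PosSemidef)
    (g : Matrix a a ℂ) (hg : g.PosSemidef) :
    (Matrix.of fun p q : m => ∑ x : a, ∑ y : a, g x y * M (y, p) (x, q)).PosSemidef := by
  obtain ⟨D, hD⟩ := psd_decomp g hg
  refine Matrix.PosSemidef.of_dotProduct_mulVec_nonneg ?_ ?_
  · ext p q
    simp only [conjTranspose_apply, Matrix.of_apply, star_sum, star_mul']
    rw [Finset.sum_comm]
    refine Finset.sum_congr rfl fun x _ => Finset.sum_congr rfl fun y _ => ?_
    rw [← hg.1.apply, ← hM.1.apply]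
    simp [star_star]
  · intro x
    have key : dotProduct (star x)
        ((Matrix.of fun p q : m => ∑ u : a, ∑ v : a, g u v * M (v, p) (u, q)) *ᵥ x)
        = ∑ c : a, dotProduct (star (fun pa : a × m => star (D c pa.1) * x pa.2))
            (M *ᵥ (fun pa : a × m => star (D c pa.1) * x pa.2)) := by
      subst hD
      simp only [dotProduct, mulVec, Matrix.of_apply, Fintype.sum_prod_type,
        Matrix.mul_apply, conjTranspose_apply, Finset.sum_mul, Finset.mul_sum,
        Pi.star_apply, star_mul', star_star]
      conv_lhs => enter [2, p, 2, q, 2, u]; rw [Finset.sum_comm]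
      conv_lhs => enter [2, p, 2, q]; rw [Finset.sum_comm]
      conv_lhs => enter [2, p]; rw [Finset.sum_comm]
      conv_lhs => rw [Finset.sum_comm]
      conv_lhs => enter [2, c, 2, p, 2, q]; rw [Finset.sum_comm]
      conv_lhs => enter [2, c, 2, p]; rw [Finset.sum_comm]
      conv_lhs => enter [2, c]; rw [Finset.sum_comm]
      conv_lhs => enter [2, c, 2, v, 2, p]; rw [Finset.sum_comm]
      refine Finset.sum_congr rfl fun c _ => Finset.sum_congr rfl fun v _ =>
        Finset.sum_congr rfl fun p _ => Finset.sum_congr rfl fun u _ =>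
        Finset.sum_congr rfl fun q _ => ?_
      ring
    rw [key]
    exact Finset.sum_nonneg fun c _ => hM.dotProduct_mulVec_nonneg _

lemma midMul_apply (ρ : Matrix (A × B) (A × B) ℂ) (M1 : Matrix (A0 × A) (A0 × A) ℂ)
    (M2 : Matrix (B × B0) (B × B0) ℂ) (p q : A0 × B0) (a : A) (b : B) :
    (midEmbed (A0:=A0) (B0:=B0) ρ * (M1 ⊗ₖ M2)) ((p.1, a), (b, p.2)) ((q.1, a), (b, q.2))
      = ∑ a' : A, ∑ b' : B,
          ρ (a, b) (a', b') * (M1 (p.1, a') (q.1, a) * M2 (b', p.2) (b, q.2)) := by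
  simp only [midEmbed, Matrix.mul_apply, Matrix.of_apply, kroneckerMap_apply,
    Fintype.sum_prod_type, ite_mul, one_mul, zero_mul, mul_ite, mul_one, mul_zero,
    Finset.sum_ite_irrel, Finset.sum_const_zero, Finset.sum_ite_eq, Finset.sum_ite_eq',
    Finset.mem_univ, if_true]

/-- if `ρ^{AB}` is separable, the effective operator is separable. -/
theorem stmt1
    (ρ : Matrix (A × B) (A × B) ℂ) (hρ : ρ.PosSemidef) (hρtr : ρ.trace = 1)
    (hρsep : IsSepOp ρ)
    (M1 : Matrix (A0 × A) (A0 × A) ℂ) (hM1 : M1.PosSemidef)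
    (M2 : Matrix (B × B0) (B × B0) ℂ) (hM2 : M2.PosSemidef) :
    IsSepOp (effOp ρ M1 M2) := by
  obtain ⟨k, f, g, hf, hg, hsum⟩ := hρsep
  refine ⟨k,
    fun i => Matrix.of fun p q : A0 => ∑ x : A, ∑ y : A, f i x y * M1 (p, y) (q, x),
    fun i => Matrix.of fun p q : B0 => ∑ x : B, ∑ y : B, g i x y * M2 (y, p) (x, q),
    fun i => compressA M1 hM1 (f i) (hf i),
    fun i => compressB M2 hM2 (g i) (hg i), ?_⟩
  ext p q
  simp only [effOp, ptraceMid, Matrix.of_apply]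
  conv_lhs =>
    enter [2, a, 2, b]
    rw [midMul_apply ρ M1 M2 p q a b]
  subst hsum
  simp only [Matrix.sum_apply, kroneckerMap_apply, Matrix.of_apply,
    Finset.sum_mul, Finset.mul_sum]
  conv_lhs => enter [2, a, 2, b, 2, a2]; rw [Finset.sum_comm]
  conv_lhs => enter [2, a, 2, b]; rw [Finset.sum_comm]
  conv_lhs => enter [2, a]; rw [Finset.sum_comm]
  conv_lhs => rw [Finset.sum_comm]
  conv_lhs => enter [2, i]; rw [Finset.sum_comm]
  conv_lhs => enter [2, i, 2, b, 2, a]; rw [Finset.sum_comm]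
  conv_lhs => enter [2, i, 2, b]; rw [Finset.sum_comm]
  refine Finset.sum_congr rfl fun i _ => Finset.sum_congr rfl fun b _ =>
    Finset.sum_congr rfl fun b2 _ => Finset.sum_congr rfl fun a _ =>
    Finset.sum_congr rfl fun a2 _ => ?_
  ring
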